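/- For any probability measure μ on ℝⁿ and any point x ∈ ℝⁿ, the half-space depth satisfies q_μ(x) ≤ exp(−Λ*_μ(x)), where Λ*_μ is the Cramér transform of μ. -/

import Mathlib

open MeasureTheory Real Set

/-- Half-space depth of a probability measure on `ℝⁿ`:
`q_μ(x) = inf_{‖ξ‖=1} μ {y | ⟨y,ξ⟩ ≥ ⟨x,ξ⟩}`. -/
noncomputable def hsDepth {n : ℕ} (μ : Measure (EuclideanSpace ℝ (Fin n)))
    (x : EuclideanSpace ℝ (Fin n)) : ℝ :=
  ⨅ ξ : {ξ : EuclideanSpace ℝ (Fin n) // ‖ξ‖ = 1},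
    (μ {y | (inner ℝ x ξ.1 : ℝ) ≤ inner ℝ y ξ.1}).toReal

/-- Cramér transform of a probability measure on `ℝⁿ`:
`Λ*_μ(x) = sup_ξ (⟨x,ξ⟩ − log ∫ e^{⟨y,ξ⟩} dμ(y))`, the supremum running over all `ξ`
for which the exponential moment is finite. -/
noncomputable def cramer {n : ℕ} (μ : Measure (EuclideanSpace ℝ (Fin n)))
    (x : EuclideanSpace ℝ (Fin n)) : ℝ :=
  ⨆ ξ : {ξ : EuclideanSpace ℝ (Fin n) // Integrable (fun y => Real.exp (inner ℝ y ξ : ℝ)) μ},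
    ((inner ℝ x ξ.1 : ℝ) - Real.log (∫ y, Real.exp ((inner ℝ y ξ.1 : ℝ)) ∂μ))

/-- For any probability measure `μ` on `ℝⁿ` and any `x ∈ ℝⁿ`,
`q_μ(x) ≤ exp (−Λ*_μ(x))`. -/
theorem depth_le_exp_neg_cramer {n : ℕ} (μ : Measure (EuclideanSpace ℝ (Fin n)))
    [IsProbabilityMeasure μ] (x : EuclideanSpace ℝ (Fin n)) :
    hsDepth μ x ≤ Real.exp (-(cramer μ x)) := by
  rcases le_or_gt (hsDepth μ x) 0 with h | h
  · exact h.trans (Real.exp_pos _).le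
  -- hsDepth is positive; in particular the index set of unit vectors is nonempty
  have hbdd : BddBelow (Set.range fun ξ : {ξ : EuclideanSpace ℝ (Fin n) // ‖ξ‖ = 1} =>
      (μ {y | (inner ℝ x ξ.1 : ℝ) ≤ inner ℝ y ξ.1}).toReal) := by
    refine ⟨0, ?_⟩
    rintro r ⟨ξ, rfl⟩
    exact ENNReal.toReal_nonneg
  have hne : Nonempty {ξ : EuclideanSpace ℝ (Fin n) // ‖ξ‖ = 1} := by
    by_contra hc
    rw [not_nonempty_iff] at hc
    have h0 : hsDepth μ x = 0 := by
      unfold hsDepth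
      rw [iInf, Set.range_eq_empty, Real.sInf_empty]
    rw [h0] at h; exact lt_irrefl 0 h
  -- Key bound: for every admissible ξ, the Chernoff bound holds
  have hne2 : Nonempty {ξ : EuclideanSpace ℝ (Fin n) //
      Integrable (fun y => Real.exp (inner ℝ y ξ : ℝ)) μ} :=
    ⟨⟨0, by simp [inner_zero_right]⟩⟩
  have key : cramer μ x ≤ -Real.log (hsDepth μ x) := by
    refine ciSup_le ?_
    rintro ⟨ξ, hint⟩
    simp only
    set I : ℝ := ∫ y, Real.exp ((inner ℝ y ξ : ℝ)) ∂μ with hI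
    have hint' : Integrable (fun y => Real.exp (1 * (inner ℝ y ξ : ℝ))) μ := by
      simpa using hint
    have hIpos : 0 < I := by
      have := ProbabilityTheory.mgf_pos (X := fun y => (inner ℝ y ξ : ℝ)) (μ := μ) (t := 1) hint'
      simpa [ProbabilityTheory.mgf, hI] using this
    have bound : hsDepth μ x ≤ Real.exp (-(inner ℝ x ξ : ℝ)) * I := by
      by_cases hξ : ξ = 0
      · -- trivial case: the bound is 1 and depth ≤ 1
        have hI1 : I = 1 := by
          simp [hI, hξ, inner_zero_right]
        obtain ⟨u⟩ := hne
        have h1 : hsDepth μ x ≤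
            (μ {y | (inner ℝ x u.1 : ℝ) ≤ inner ℝ y u.1}).toReal := ciInf_le hbdd u
        have h2 : (μ {y | (inner ℝ x u.1 : ℝ) ≤ inner ℝ y u.1}).toReal ≤ 1 := by
          simpa using ENNReal.toReal_mono (ENNReal.one_ne_top) (prob_le_one)
        simp [hξ, hI1, inner_zero_right]
        linarith
      · -- normalize ξ to a unit vector
        have hnorm : (0 : ℝ) < ‖ξ‖ := norm_pos_iff.mpr hξ
        set u : EuclideanSpace ℝ (Fin n) := ‖ξ‖⁻¹ • ξ with hu
        have hu1 : ‖u‖ = 1 := by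
          rw [hu, norm_smul, norm_inv, norm_norm, inv_mul_cancel₀ hnorm.ne']
        have hset : {y : EuclideanSpace ℝ (Fin n) | (inner ℝ x u : ℝ) ≤ inner ℝ y u}
            = {y | (inner ℝ x ξ : ℝ) ≤ inner ℝ y ξ} := by
          ext y
          simp only [Set.mem_setOf_eq, hu, real_inner_smul_right]
          exact mul_le_mul_iff_of_pos_left (inv_pos.mpr hnorm)
        have h1 : hsDepth μ x ≤
            (μ {y | (inner ℝ x u : ℝ) ≤ inner ℝ y u}).toReal := ciInf_le hbdd ⟨u, hu1⟩
        rw [hset] at h1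
        have h2 := ProbabilityTheory.measure_ge_le_exp_mul_mgf
          (X := fun y => (inner ℝ y ξ : ℝ)) (μ := μ) (t := 1)
          ((inner ℝ x ξ : ℝ)) zero_le_one hint'
        simp only [ProbabilityTheory.mgf, neg_mul, one_mul] at h2
        exact h1.trans (by simpa [hI, Measure.real_def] using h2)
    -- take logs
    have hlog : Real.log (hsDepth μ x) ≤ -(inner ℝ x ξ : ℝ) + Real.log I := by
      calc Real.log (hsDepth μ x) ≤ Real.log (Real.exp (-(inner ℝ x ξ : ℝ)) * I) :=
            Real.log_le_log h bound
        _ = -(inner ℝ x ξ : ℝ) + Real.log I := by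
            rw [Real.log_mul (Real.exp_ne_zero _) hIpos.ne', Real.log_exp]
    linarith
  calc hsDepth μ x = Real.exp (Real.log (hsDepth μ x)) := (Real.exp_log h).symm
    _ ≤ Real.exp (-(cramer μ x)) := Real.exp_le_exp.mpr (by linarith)
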